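/- If G is an n-vertex graph containing no copy of the friendship graph F_{k+1} (k+1 triangles sharing exactly one common vertex), then e(G) ≤ ⌊n²/4⌋ + k·Δ(G), where Δ(G) is the maximum degree of G. -/

import Mathlib

open SimpleGraph

/-- Number of edges of a graph. -/
noncomputable def edgeCount {V : Type*} (G : SimpleGraph V) : ℕ := G.edgeSet.ncard

/-- Degree of a vertex. -/
noncomputable def deg {V : Type*} (G : SimpleGraph V) (v : V) : ℕ := (G.neighborSet v).ncard

/-- Maximum degree. -/
noncomputable def maxDeg {V : Type*} (G : SimpleGraph V) : ℕ := sSup (Set.range (deg G))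

/-- Matching number: maximum size of a matching. -/
noncomputable def matchNum {V : Type*} (G : SimpleGraph V) : ℕ :=
  sSup {n | ∃ M : G.Subgraph, M.IsMatching ∧ M.edgeSet.ncard = n}

/-- `G` contains a copy of `H` (a subgraph isomorphic to `H`). -/
def CopyIn {α β : Type*} (H : SimpleGraph α) (G : SimpleGraph β) : Prop :=
  ∃ f : H →g G, Function.Injective f

/-- The friendship graph `F_k`: `k` triangles sharing exactly one common vertex (vertex 0). -/
def friendship (k : ℕ) : SimpleGraph (Fin (2 * k + 1)) :=
  SimpleGraph.fromRel (fun a b => a.val = 0 ∨ b.val = 0 ∨ (a.val + 1) / 2 = (b.val + 1) / 2)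

/-- The star `K_{1,m}` with center 0 and `m` leaves. -/
def starGraph (m : ℕ) : SimpleGraph (Fin (m + 1)) :=
  SimpleGraph.fromRel (fun a b => a.val = 0 ∨ b.val = 0)

/-- The matching `mK_2` of `m` disjoint edges. -/
def matchGraph (m : ℕ) : SimpleGraph (Fin (2 * m)) :=
  SimpleGraph.fromRel (fun a b => a.val / 2 = b.val / 2)

/-- Turán number: max edges of an `n`-vertex graph with no copy of `H`. -/
noncomputable def exNum (n : ℕ) {α : Type*} (H : SimpleGraph α) : ℕ :=
  sSup {m | ∃ G : SimpleGraph (Fin n), ¬ CopyIn H G ∧ edgeCount G = m}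

/-- `f(ν, Δ)`: max edges of a graph with matching number ≤ ν and max degree ≤ Δ. -/
noncomputable def fMax (ν Δ : ℕ) : ℕ :=
  sSup {m | ∃ (n : ℕ) (G : SimpleGraph (Fin n)),
    matchNum G ≤ ν ∧ (∀ v, deg G v ≤ Δ) ∧ edgeCount G = m}

/-- A surjective edge-coloring of `K_n` using exactly `r` colors `0, …, r-1`. -/
def IsSurjColoring (n r : ℕ) (c : Sym2 (Fin n) → ℕ) : Prop :=
  (∀ e : Sym2 (Fin n), ¬ e.IsDiag → c e < r) ∧
  ∀ i < r, ∃ e : Sym2 (Fin n), ¬ e.IsDiag ∧ c e = i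

/-- The colored `K_n` contains a rainbow copy of `H`. -/
def RainbowCopy {α : Type*} {n : ℕ} (c : Sym2 (Fin n) → ℕ) (H : SimpleGraph α) : Prop :=
  ∃ f : H →g (⊤ : SimpleGraph (Fin n)), Function.Injective f ∧
    Set.InjOn (fun e => c (Sym2.map (⇑f) e)) H.edgeSet

/-- Anti-Ramsey number for the pair `{K_{1,k+1}, (k+1)K_2}`. -/
noncomputable def arPair (n k : ℕ) : ℕ :=
  sInf {r | ∀ c : Sym2 (Fin n) → ℕ, IsSurjColoring n r c →
    RainbowCopy c (_root_.starGraph (k + 1)) ∨ RainbowCopy c (matchGraph (k + 1))}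

/-- Anti-Ramsey number of the friendship graph `F_k`. -/
noncomputable def arFriend (n k : ℕ) : ℕ :=
  sInf {r | ∀ c : Sym2 (Fin n) → ℕ, IsSurjColoring n r c → RainbowCopy c (friendship k)}

/-- Anti-Ramsey number of a general graph `G`. -/
noncomputable def arGraph (n : ℕ) {α : Type*} (G : SimpleGraph α) : ℕ :=
  sInf {r | ∀ c : Sym2 (Fin n) → ℕ, IsSurjColoring n r c → RainbowCopy c G}

/-- Turán number of the family `{G − e : e ∈ E(G)}`. -/
noncomputable def exFamDel (n : ℕ) {α : Type*} (G : SimpleGraph α) : ℕ :=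
  sSup {m | ∃ H : SimpleGraph (Fin n),
    (∀ e ∈ G.edgeSet, ¬ CopyIn (G.deleteEdges {e}) H) ∧ edgeCount H = m}

section Aux
open Finset
/-- Pairwise disjoint family of edges. -/
def PDisj {V : Type*} (M : Finset (Sym2 V)) : Prop :=
  ∀ e ∈ M, ∀ f ∈ M, e ≠ f → ∀ x, x ∈ e → x ∉ f

section lemC
variable {V : Type*} [DecidableEq V]

lemma filter_mem_eq_pair {A : Finset V} {e : Sym2 V} (he : ¬ e.IsDiag)
    (hA : ∀ x ∈ e, x ∈ A) : ∃ a b : V, a ≠ b ∧ e = s(a, b) ∧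
      A.filter (fun x => x ∈ e) = {a, b} := by
  induction e with
  | _ a b =>
    refine ⟨a, b, by simpa using he, rfl, ?_⟩
    ext x
    simp only [mem_filter, Sym2.mem_iff, mem_insert, mem_singleton]
    constructor
    · rintro ⟨-, h⟩; exact h
    · rintro (rfl | rfl)
      · exact ⟨hA x (by simp), Or.inl rfl⟩
      · exact ⟨hA x (by simp), Or.inr rfl⟩

lemma sum_deg_eq {A : Finset V} {P : Finset (Sym2 V)}
    (hP : ∀ e ∈ P, ¬ e.IsDiag ∧ ∀ x ∈ e, x ∈ A) :
    ∑ x ∈ A, (P.filter (fun e => x ∈ e)).card = 2 * P.card := by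
  have h1 : ∑ x ∈ A, (P.filter (fun e => x ∈ e)).card
      = ∑ e ∈ P, (A.filter (fun x => x ∈ e)).card := by
    simp only [card_filter]
    rw [Finset.sum_comm]
  rw [h1]
  rw [Finset.sum_congr rfl (fun e he => ?_), Finset.sum_const, smul_eq_mul, mul_comm]
  obtain ⟨a, b, hab, -, hpair⟩ := filter_mem_eq_pair (hP e he).1 (hP e he).2
  rw [hpair, card_insert_of_notMem (by simpa using hab), card_singleton]

lemma degP_le {A : Finset V} {P : Finset (Sym2 V)}
    (hP : ∀ e ∈ P, ¬ e.IsDiag ∧ ∀ x ∈ e, x ∈ A) (x : V) :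
    (P.filter (fun e => x ∈ e)).card ≤ A.card - 1 := by
  by_cases hxA : x ∈ A
  swap
  · have : P.filter (fun e => x ∈ e) = ∅ := by
      apply Finset.filter_eq_empty_iff.2
      intro e he hx
      exact hxA ((hP e he).2 x hx)
    simp [this]
  have : (P.filter (fun e => x ∈ e)).card ≤ (A.erase x).card := by
    apply Finset.card_le_card_of_injOn
      (fun e => if h : x ∈ e then Sym2.Mem.other' h else x)
    · intro e he
      simp only [mem_coe, mem_filter] at he ⊢
      rw [dif_pos he.2]
      apply Finset.mem_erase.2
      constructor
      · intro hx
        exact (hP e he.1).1 (by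
          have := Sym2.other_spec' he.2
          rw [hx] at this
          rw [← this]; simp)
      · exact (hP e he.1).2 _ (Sym2.other_mem' he.2)
    · intro e he f hf hef
      simp only [mem_coe, mem_filter] at he hf
      dsimp only at hef
      rw [dif_pos he.2, dif_pos hf.2] at hef
      rw [← Sym2.other_spec' he.2, ← Sym2.other_spec' hf.2, hef]
  calc _ ≤ (A.erase x).card := this
    _ ≤ A.card - 1 := by rw [Finset.card_erase_of_mem hxA]

end lemC

section lemC2
variable {V : Type*} [DecidableEq V]

lemma augment {A : Finset V} {P M : Finset (Sym2 V)}
    (hP : ∀ e ∈ P, ¬ e.IsDiag ∧ ∀ x ∈ e, x ∈ A)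
    (hMP : M ⊆ P) (hMd : PDisj M)
    (hmax : ∀ M' ⊆ P, PDisj M' → M'.card ≤ M.card)
    {e₀ : Sym2 V} (he₀ : e₀ ∈ M) {u u' α β : V}
    (huu' : u ≠ u') (hu : ∀ e ∈ M, u ∉ e) (hu' : ∀ e ∈ M, u' ∉ e)
    (heq : e₀ = s(α, β)) (h1 : s(u, β) ∈ P) (h2 : s(u', α) ∈ P) : False := by
  have hαβ : α ≠ β := by
    have := (hP e₀ (hMP he₀)).1
    rw [heq] at this; simpa using this
  have hαe : α ∈ e₀ := by rw [heq]; simp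
  have hβe : β ∈ e₀ := by rw [heq]; simp
  have huα : u ≠ α := fun h => hu e₀ he₀ (h ▸ hαe)
  have huβ : u ≠ β := fun h => hu e₀ he₀ (h ▸ hβe)
  have hu'α : u' ≠ α := fun h => hu' e₀ he₀ (h ▸ hαe)
  have hu'β : u' ≠ β := fun h => hu' e₀ he₀ (h ▸ hβe)
  set M' : Finset (Sym2 V) := insert s(u, β) (insert s(u', α) (M.erase e₀)) with hM'
  -- membership characterization
  have hmem : ∀ x : V, ∀ f ∈ M.erase e₀, x ∈ f → (x ≠ u ∧ x ≠ u' ∧ x ≠ α ∧ x ≠ β) := by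
    intro x f hf hxf
    obtain ⟨hfe, hfM⟩ := Finset.mem_erase.1 hf
    refine ⟨fun h => hu f hfM (h ▸ hxf), fun h => hu' f hfM (h ▸ hxf), ?_, ?_⟩
    · intro h; exact hMd f hfM e₀ he₀ hfe x hxf (h ▸ hαe)
    · intro h; exact hMd f hfM e₀ he₀ hfe x hxf (h ▸ hβe)
  have hne1 : s(u, β) ∉ insert s(u',α) (M.erase e₀) := by
    intro h
    rcases Finset.mem_insert.1 h with h | h
    · rw [Sym2.eq_iff] at h
      rcases h with ⟨h, -⟩ | ⟨h, -⟩
      · exact huu' h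
      · exact huα h
    · exact ((hmem u _ h (by simp)).1 rfl)
  have hne2 : s(u', α) ∉ M.erase e₀ := fun h => (hmem u' _ h (by simp)).2.1 rfl
  have hsub : M' ⊆ P := by
    intro e he
    rcases Finset.mem_insert.1 he with rfl | he
    · exact h1
    rcases Finset.mem_insert.1 he with rfl | he
    · exact h2
    · exact hMP (Finset.mem_of_mem_erase he)
  have key : ∀ x : V, x ∈ s(u, β) → x ∈ s(u', α) → False := by
    intro x hx hx'
    rw [Sym2.mem_iff] at hx hx'
    rcases hx with rfl | rfl <;> rcases hx' with h | h <;>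
      first
        | exact huu' h | exact huα h | exact hu'β h.symm | exact hαβ h.symm
  have key2 : ∀ x : V, ∀ f ∈ M.erase e₀, x ∈ f → x ∈ s(u, β) → False := by
    intro x f hf hxf hx
    rw [Sym2.mem_iff] at hx
    rcases hx with rfl | rfl
    · exact (hmem _ f hf hxf).1 rfl
    · exact (hmem _ f hf hxf).2.2.2 rfl
  have key3 : ∀ x : V, ∀ f ∈ M.erase e₀, x ∈ f → x ∈ s(u', α) → False := by
    intro x f hf hxf hx
    rw [Sym2.mem_iff] at hx
    rcases hx with rfl | rfl
    · exact (hmem _ f hf hxf).2.1 rfl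
    · exact (hmem _ f hf hxf).2.2.1 rfl
  have hdisj : PDisj M' := by
    intro e he f hf hef x hxe hxf
    simp only [hM', Finset.mem_insert] at he hf
    rcases he with he | he | he <;> rcases hf with hf | hf | hf
    · exact hef (he.trans hf.symm)
    · exact key x (he ▸ hxe) (hf ▸ hxf)
    · exact key2 x f hf hxf (he ▸ hxe)
    · exact key x (hf ▸ hxf) (he ▸ hxe)
    · exact hef (he.trans hf.symm)
    · exact key3 x f hf hxf (he ▸ hxe)
    · exact key2 x e he hxe (hf ▸ hxf)
    · exact key3 x e he hxe (hf ▸ hxf)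
    · exact hMd _ (Finset.mem_of_mem_erase he) _ (Finset.mem_of_mem_erase hf) hef x hxe hxf
  have hcard : M'.card = M.card + 1 := by
    rw [hM', Finset.card_insert_of_notMem hne1, Finset.card_insert_of_notMem hne2,
      Finset.card_erase_of_mem he₀]
    have : 0 < M.card := Finset.card_pos.2 ⟨e₀, he₀⟩
    omega
  have := hmax M' hsub hdisj
  omega


lemma lemC [DecidableEq V] (t : ℕ) (A : Finset V) (P : Finset (Sym2 V))
    (hP : ∀ e ∈ P, ¬ e.IsDiag ∧ ∀ x ∈ e, x ∈ A)
    (hM : ∀ M ⊆ P, PDisj M → M.card ≤ t) :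
    P.card ≤ t * A.card := by
  classical
  induction A using Finset.strongInduction generalizing P with
  | _ A ih =>
  by_cases hcase : ∃ x ∈ A, (P.filter (fun e => x ∈ e)).card ≤ t
  · -- remove a low degree vertex
    obtain ⟨x, hxA, hdx⟩ := hcase
    have hsplit := Finset.card_filter_add_card_filter_not
      (s := P) (p := fun e => x ∈ e)
    have hsub : (A.erase x) ⊂ A := Finset.erase_ssubset hxA
    have hP' : ∀ e ∈ P.filter (fun e => ¬ x ∈ e), ¬ e.IsDiag ∧ ∀ y ∈ e, y ∈ A.erase x := by
      intro e he
      obtain ⟨heP, hex⟩ := Finset.mem_filter.1 he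
      refine ⟨(hP e heP).1, fun y hy => Finset.mem_erase.2 ⟨?_, (hP e heP).2 y hy⟩⟩
      rintro rfl; exact hex hy
    have hM' : ∀ M ⊆ P.filter (fun e => ¬ x ∈ e), PDisj M → M.card ≤ t :=
      fun M hMs hMd => hM M (hMs.trans (Finset.filter_subset _ _)) hMd
    have hrec := ih (A.erase x) hsub _ hP' hM'
    rw [Finset.card_erase_of_mem hxA] at hrec
    have hA1 : 1 ≤ A.card := Finset.card_pos.2 ⟨x, hxA⟩
    have : t * A.card = t * (A.card - 1) + t := by
      conv_lhs => rw [← Nat.succ_pred_eq_of_pos hA1]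
      rw [Nat.mul_succ]; rfl
    omega
  · push_neg at hcase
    by_cases hbig : A.card ≤ 2 * t + 1
    · -- small vertex set: quadratic bound
      have hsum := sum_deg_eq hP
      have hub : ∑ x ∈ A, (P.filter (fun e => x ∈ e)).card ≤ A.card * (A.card - 1) := by
        calc ∑ x ∈ A, (P.filter (fun e => x ∈ e)).card
            ≤ ∑ _x ∈ A, (A.card - 1) :=
              Finset.sum_le_sum (fun x _ => degP_le hP x)
          _ = A.card * (A.card - 1) := by rw [Finset.sum_const, smul_eq_mul]
      have h2 : 2 * P.card ≤ A.card * (2 * t) := by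
        calc 2 * P.card = ∑ x ∈ A, (P.filter (fun e => x ∈ e)).card := hsum.symm
          _ ≤ A.card * (A.card - 1) := hub
          _ ≤ A.card * (2 * t) := Nat.mul_le_mul_left _ (by omega)
      have := Nat.mul_le_mul_left t (le_refl A.card)
      nlinarith [h2]
    · -- big vertex set: impossible
      exfalso
      push_neg at hbig
      -- maximum matching M
      obtain ⟨M, hMmem, hMmax⟩ := Finset.exists_max_image
        (P.powerset.filter (fun M => PDisj M)) Finset.card
        ⟨∅, Finset.mem_filter.2 ⟨Finset.empty_mem_powerset P, by intro e he; simp at he⟩⟩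
      obtain ⟨hMP', hMd⟩ := Finset.mem_filter.1 hMmem
      have hMP : M ⊆ P := Finset.mem_powerset.1 hMP'
      have hmax : ∀ M' ⊆ P, PDisj M' → M'.card ≤ M.card := by
        intro M' hs hd
        exact hMmax M' (Finset.mem_filter.2 ⟨Finset.mem_powerset.2 hs, hd⟩)
      have hmt : M.card ≤ t := hM M hMP hMd
      -- covered vertices
      set S : Finset V := M.biUnion (fun e => A.filter (fun x => x ∈ e)) with hS
      have hScard : S.card ≤ 2 * M.card := by
        calc S.card ≤ ∑ e ∈ M, (A.filter (fun x => x ∈ e)).card := Finset.card_biUnion_le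
          _ ≤ ∑ _e ∈ M, 2 := Finset.sum_le_sum (fun e he => by
              obtain ⟨a, b, hab, -, hpair⟩ :=
                filter_mem_eq_pair (hP e (hMP he)).1 (hP e (hMP he)).2
              rw [hpair]
              exact (Finset.card_insert_le _ _).trans (by simp))
          _ = 2 * M.card := by rw [Finset.sum_const, smul_eq_mul, mul_comm]
      have hSA : S ⊆ A := by
        intro x hx
        obtain ⟨e, -, hx⟩ := Finset.mem_biUnion.1 hx
        exact (Finset.mem_filter.1 hx).1
      have hmemS : ∀ x ∈ A, ∀ e ∈ M, x ∈ e → x ∈ S := by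
        intro x hx e he hxe
        exact Finset.mem_biUnion.2 ⟨e, he, Finset.mem_filter.2 ⟨hx, hxe⟩⟩
      -- uncovered vertices
      have hU : 2 ≤ (A \ S).card := by
        rw [Finset.card_sdiff_of_subset hSA]
        omega
      obtain ⟨u, hu, u', hu', huu'⟩ := Finset.one_lt_card.1 (by omega : 1 < (A \ S).card)
      obtain ⟨huA, huS⟩ := Finset.mem_sdiff.1 hu
      obtain ⟨hu'A, hu'S⟩ := Finset.mem_sdiff.1 hu'
      have hufree : ∀ e ∈ M, u ∉ e := fun e he hx => huS (hmemS u huA e he hx)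
      have hu'free : ∀ e ∈ M, u' ∉ e := fun e he hx => hu'S (hmemS u' hu'A e he hx)
      -- neighborhoods of u, u' within S
      have hNu : ∀ w : V, w ∈ A \ S → (∀ e ∈ M, w ∉ e) →
          ∃ N : Finset V, N ⊆ S ∧ t + 1 ≤ N.card ∧ ∀ z ∈ N, s(w, z) ∈ P := by
        intro w hw hwfree
        obtain ⟨hwA, hwS⟩ := Finset.mem_sdiff.1 hw
        set N := A.filter (fun z => s(w, z) ∈ P) with hN
        have hNP : ∀ z ∈ N, s(w, z) ∈ P := fun z hz => (Finset.mem_filter.1 hz).2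
        have hNS : N ⊆ S := by
          intro z hz
          obtain ⟨hzA, hzP⟩ := Finset.mem_filter.1 hz
          by_contra hzS
          have hwz : w ≠ z := by
            rintro rfl
            exact (hP _ hzP).1 (by simp)
          have hnotM : s(w, z) ∉ M := fun h => hwfree _ h (by simp)
          have hfr : ∀ e ∈ M, ∀ x, x ∈ s(w,z) → x ∉ e := by
            intro e he x hx hxe
            rw [Sym2.mem_iff] at hx
            rcases hx with rfl | rfl
            · exact hwfree e he hxe
            · exact hzS (hmemS x hzA e he hxe)
          have hins : PDisj (insert s(w,z) M) := by
            intro e he f hf hef y hye hyf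
            rcases Finset.mem_insert.1 he with rfl | he
            · rcases Finset.mem_insert.1 hf with hf' | hf'
              · exact hef hf'.symm
              · exact hfr f hf' y hye hyf
            · rcases Finset.mem_insert.1 hf with rfl | hf'
              · exact hfr e he y hyf hye
              · exact hMd e he f hf' hef y hye hyf
          have hcard := hmax (insert s(w,z) M)
            (Finset.insert_subset hzP hMP) hins
          rw [Finset.card_insert_of_notMem hnotM] at hcard
          omega
        have hNcard : t + 1 ≤ N.card := by
          have hdeg := hcase w hwA
          have hinj : (P.filter (fun e => w ∈ e)).card ≤ N.card := by
            apply Finset.card_le_card_of_injOn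
              (fun e => if h : w ∈ e then Sym2.Mem.other' h else w)
            · intro e he
              obtain ⟨heP, hwe⟩ := Finset.mem_filter.1 he
              simp only [Finset.mem_coe]
              rw [dif_pos hwe]
              refine Finset.mem_filter.2
                ⟨(hP e heP).2 _ (Sym2.other_mem' hwe), ?_⟩
              rw [Sym2.other_spec' hwe]
              exact heP
            · intro e he f hf hef
              simp only [Finset.mem_coe, Finset.mem_filter] at he hf
              dsimp only at hef
              rw [dif_pos he.2, dif_pos hf.2] at hef
              rw [← Sym2.other_spec' he.2, ← Sym2.other_spec' hf.2, hef]
          omega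
        exact ⟨N, hNS, hNcard, hNP⟩
      obtain ⟨Nu, hNuS, hNucard, hNuP⟩ := hNu u hu hufree
      obtain ⟨Nu', hNu'S, hNu'card, hNu'P⟩ := hNu u' hu' hu'free
      have hcover : ∀ (N : Finset V), N ⊆ S →
          N.card ≤ ∑ e ∈ M, (N.filter (fun x => x ∈ e)).card := by
        intro N hNS
        calc N.card ≤ (M.biUnion (fun e => N.filter (fun x => x ∈ e))).card := by
              apply Finset.card_le_card
              intro z hz
              obtain ⟨e, heM, hze⟩ := Finset.mem_biUnion.1 (hNS hz)
              exact Finset.mem_biUnion.2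
                ⟨e, heM, Finset.mem_filter.2 ⟨hz, (Finset.mem_filter.1 hze).2⟩⟩
          _ ≤ ∑ e ∈ M, (N.filter (fun x => x ∈ e)).card := Finset.card_biUnion_le
      have hsum3 : ∃ e ∈ M, 3 ≤ (Nu.filter (fun x => x ∈ e)).card
          + (Nu'.filter (fun x => x ∈ e)).card := by
        by_contra hno
        push_neg at hno
        have hle : ∑ e ∈ M, ((Nu.filter (fun x => x ∈ e)).card
            + (Nu'.filter (fun x => x ∈ e)).card) ≤ 2 * M.card := by
          calc _ ≤ ∑ _e ∈ M, 2 :=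
                Finset.sum_le_sum (fun e he => by have := hno e he; omega)
            _ = 2 * M.card := by rw [Finset.sum_const, smul_eq_mul, mul_comm]
        rw [Finset.sum_add_distrib] at hle
        have h1 := hcover Nu hNuS
        have h2 := hcover Nu' hNu'S
        omega
      obtain ⟨e₀, he₀, hcnt⟩ := hsum3
      obtain ⟨a, b, hab, heq, hpair⟩ :=
        filter_mem_eq_pair (hP e₀ (hMP he₀)).1 (hP e₀ (hMP he₀)).2
      have hsubab : ∀ (N : Finset V), N ⊆ A →
          N.filter (fun x => x ∈ e₀) ⊆ {a, b} := by
        intro N hNA z hz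
        obtain ⟨hzN, hze⟩ := Finset.mem_filter.1 hz
        rw [← hpair]
        exact Finset.mem_filter.2 ⟨hNA hzN, hze⟩
      have habcard : ({a, b} : Finset V).card = 2 := by
        rw [Finset.card_insert_of_notMem (by simpa using hab), Finset.card_singleton]
      have hNuA : Nu ⊆ A := hNuS.trans hSA
      have hNu'A : Nu' ⊆ A := hNu'S.trans hSA
      have hca : (Nu.filter (fun x => x ∈ e₀)).card ≤ 2 :=
        (Finset.card_le_card (hsubab Nu hNuA)).trans (le_of_eq habcard)
      have hcb : (Nu'.filter (fun x => x ∈ e₀)).card ≤ 2 :=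
        (Finset.card_le_card (hsubab Nu' hNu'A)).trans (le_of_eq habcard)
      rcases (by omega : (Nu.filter (fun x => x ∈ e₀)).card = 2 ∧
          1 ≤ (Nu'.filter (fun x => x ∈ e₀)).card ∨
          (Nu'.filter (fun x => x ∈ e₀)).card = 2 ∧
          1 ≤ (Nu.filter (fun x => x ∈ e₀)).card) with ⟨h2c, h1c⟩ | ⟨h2c, h1c⟩
      · have hEq : Nu.filter (fun x => x ∈ e₀) = {a, b} :=
          Finset.eq_of_subset_of_card_le (hsubab Nu hNuA) (by omega)
        have haNu : a ∈ Nu := (Finset.mem_filter.1 (hEq ▸ (by simp : a ∈ ({a,b} : Finset V)))).1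
        have hbNu : b ∈ Nu := (Finset.mem_filter.1 (hEq ▸ (by simp : b ∈ ({a,b} : Finset V)))).1
        obtain ⟨w, hw⟩ := Finset.card_pos.1 h1c
        have hwab : w ∈ ({a, b} : Finset V) := hsubab Nu' hNu'A hw
        have hwNu' : w ∈ Nu' := (Finset.mem_filter.1 hw).1
        rcases Finset.mem_insert.1 hwab with rfl | hwb
        · exact augment hP hMP hMd hmax he₀ huu' hufree hu'free heq
            (hNuP b hbNu) (hNu'P w hwNu')
        · have : w = b := Finset.mem_singleton.1 hwb
          subst this
          exact augment hP hMP hMd hmax he₀ huu' hufree hu'free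
            (heq.trans (Sym2.eq_swap)) (hNuP a haNu) (hNu'P w hwNu')
      · have hEq : Nu'.filter (fun x => x ∈ e₀) = {a, b} :=
          Finset.eq_of_subset_of_card_le (hsubab Nu' hNu'A) (by omega)
        have haNu : a ∈ Nu' := (Finset.mem_filter.1 (hEq ▸ (by simp : a ∈ ({a,b} : Finset V)))).1
        have hbNu : b ∈ Nu' := (Finset.mem_filter.1 (hEq ▸ (by simp : b ∈ ({a,b} : Finset V)))).1
        obtain ⟨w, hw⟩ := Finset.card_pos.1 h1c
        have hwab : w ∈ ({a, b} : Finset V) := hsubab Nu hNuA hw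
        have hwNu : w ∈ Nu := (Finset.mem_filter.1 hw).1
        rcases Finset.mem_insert.1 hwab with rfl | hwb
        · exact augment hP hMP hMd hmax he₀ huu'.symm hu'free hufree heq
            (hNu'P b hbNu) (hNuP w hwNu)
        · have : w = b := Finset.mem_singleton.1 hwb
          subst this
          exact augment hP hMP hMd hmax he₀ huu'.symm hu'free hufree
            (heq.trans (Sym2.eq_swap)) (hNu'P a haNu) (hNuP w hwNu)

end lemC2

section lemB
variable {V : Type*}

lemma sym2_rep (e : Sym2 V) : ∃ p : V × V, e = s(p.1, p.2) :=
  Sym2.ind (fun x y => ⟨(x, y), rfl⟩) e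

set_option maxHeartbeats 1000000 in
lemma lemB [Fintype V] (k : ℕ) (G : SimpleGraph V)
    (hfree : ¬ CopyIn (friendship (k + 1)) G) (v : V) [DecidableEq V]
    [DecidableRel G.Adj] :
    ∀ M ⊆ G.edgeFinset.filter (fun e => ∀ x ∈ e, x ∈ G.neighborFinset v),
      PDisj M → M.card ≤ k := by
  intro M hMsub hMd
  by_contra hk
  push_neg at hk
  obtain ⟨M', hM'M, hM'card⟩ := Finset.exists_subset_card_eq hk
  have hM'sub : ∀ e ∈ M', e ∈ G.edgeFinset ∧ ∀ x ∈ e, x ∈ G.neighborFinset v := by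
    intro e he
    have := hMsub (hM'M he)
    exact ⟨(Finset.mem_filter.1 this).1, (Finset.mem_filter.1 this).2⟩
  have hM'd : PDisj M' := fun e he f hf => hMd e (hM'M he) f (hM'M hf)
  -- enumerate the matching via the list of elements
  have hlen : M'.toList.length = k + 1 := by rw [Finset.length_toList, hM'card]
  have hnd : M'.toList.Nodup := M'.nodup_toList
  let σ : Fin (k + 1) → Sym2 V := fun i => M'.toList.get (Fin.cast hlen.symm i)
  have hσM' : ∀ i, σ i ∈ M' := by
    intro i
    exact Finset.mem_toList.1 (List.get_mem M'.toList _)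
  have hσinj : ∀ i i', i ≠ i' → σ i ≠ σ i' := by
    intro i i' hii' h
    have h2 : Fin.cast hlen.symm i = Fin.cast hlen.symm i' :=
      List.nodup_iff_injective_get.1 hnd h
    have h3 : (Fin.cast hlen.symm i).val = (Fin.cast hlen.symm i').val :=
      congrArg Fin.val h2
    rw [Fin.coe_cast, Fin.coe_cast] at h3
    exact hii' (Fin.ext h3)
  -- endpoints
  let a : Fin (k + 1) → V := fun i => (Classical.choose (sym2_rep (σ i))).1
  let b : Fin (k + 1) → V := fun i => (Classical.choose (sym2_rep (σ i))).2
  have hspec : ∀ i, σ i = s(a i, b i) := fun i => Classical.choose_spec (sym2_rep (σ i))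
  have hamem : ∀ i, a i ∈ σ i := fun i => by rw [hspec i]; simp
  have hbmem : ∀ i, b i ∈ σ i := fun i => by rw [hspec i]; simp
  have hadj : ∀ i, G.Adj (a i) (b i) := by
    intro i
    have := (hM'sub _ (hσM' i)).1
    rw [hspec i] at this
    simpa [SimpleGraph.mem_edgeFinset] using this
  have hne : ∀ i, a i ≠ b i := fun i => (hadj i).ne
  have hva : ∀ i, G.Adj v (a i) := by
    intro i
    have := (hM'sub _ (hσM' i)).2 (a i) (hamem i)
    simpa [SimpleGraph.mem_neighborFinset] using this
  have hvb : ∀ i, G.Adj v (b i) := by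
    intro i
    have := (hM'sub _ (hσM' i)).2 (b i) (hbmem i)
    simpa [SimpleGraph.mem_neighborFinset] using this
  have hav : ∀ i, a i ≠ v := fun i => (hva i).ne'
  have hbv : ∀ i, b i ≠ v := fun i => (hvb i).ne'
  have hcross : ∀ i i', i ≠ i' → a i ≠ a i' ∧ a i ≠ b i' ∧ b i ≠ a i' ∧ b i ≠ b i' := by
    intro i i' hii'
    have hd := hM'd (σ i) (hσM' i) (σ i') (hσM' i') (hσinj i i' hii')
    refine ⟨?_, ?_, ?_, ?_⟩
    · intro h; exact hd (a i) (hamem i) (h ▸ hamem i')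
    · intro h; exact hd (a i) (hamem i) (h ▸ hbmem i')
    · intro h; exact hd (b i) (hbmem i) (h ▸ hamem i')
    · intro h; exact hd (b i) (hbmem i) (h ▸ hbmem i')
  -- the embedding
  have hlt : ∀ j : Fin (2 * (k + 1) + 1), (j.val - 1) / 2 < k + 1 := by
    intro j; have := j.isLt; omega
  set F : Fin (2 * (k + 1) + 1) → V := fun j =>
    if j.val = 0 then v
    else if j.val % 2 = 1 then a ⟨(j.val - 1) / 2, hlt j⟩
    else b ⟨(j.val - 1) / 2, hlt j⟩ with hF
  have hFval : ∀ j : Fin (2 * (k + 1) + 1), j.val ≠ 0 →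
      F j = (if j.val % 2 = 1 then a ⟨(j.val - 1) / 2, hlt j⟩
        else b ⟨(j.val - 1) / 2, hlt j⟩) := by
    intro j hj
    rw [hF]
    exact if_neg hj
  have hF0 : ∀ j : Fin (2 * (k + 1) + 1), j.val = 0 → F j = v := by
    intro j hj
    rw [hF]
    exact if_pos hj
  have hFnz : ∀ j : Fin (2 * (k + 1) + 1), j.val ≠ 0 → G.Adj v (F j) := by
    intro j hj
    rw [hFval j hj]
    split
    · exact hva _
    · exact hvb _
  have hFinj : Function.Injective F := by
    intro x y hxy
    by_contra hne'
    have hvalne : x.val ≠ y.val := fun h => hne' (Fin.ext h)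
    rcases Nat.eq_zero_or_pos x.val with hx0 | hx0
    · have hy0 : y.val ≠ 0 := by omega
      rw [hF0 x hx0] at hxy
      exact (hFnz y hy0).ne' hxy.symm
    rcases Nat.eq_zero_or_pos y.val with hy0 | hy0
    · rw [hF0 y hy0] at hxy
      exact (hFnz x (by omega)).ne' hxy
    have hx' : x.val ≠ 0 := by omega
    have hy' : y.val ≠ 0 := by omega
    rw [hFval x hx', hFval y hy'] at hxy
    set i : Fin (k+1) := ⟨(x.val - 1) / 2, hlt x⟩ with hi
    set i' : Fin (k+1) := ⟨(y.val - 1) / 2, hlt y⟩ with hi'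
    by_cases hii' : i = i'
    · have hvne : (x.val - 1) / 2 = (y.val - 1) / 2 := by
        have := congrArg Fin.val hii'; simpa [hi, hi'] using this
      have hpar : x.val % 2 ≠ y.val % 2 := by omega
      rw [hii'] at hxy
      rcases Nat.mod_two_eq_zero_or_one x.val with hx2 | hx2 <;>
        rcases Nat.mod_two_eq_zero_or_one y.val with hy2 | hy2
      · omega
      · rw [if_neg (by omega), if_pos hy2] at hxy
        exact hne i' hxy.symm
      · rw [if_pos hx2, if_neg (by omega)] at hxy
        exact hne i' hxy
      · omega
    · obtain ⟨q1, q2, q3, q4⟩ := hcross i i' hii'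
      split at hxy <;> split at hxy
      · exact q1 hxy
      · exact q2 hxy
      · exact q3 hxy
      · exact q4 hxy
  have hhom : ∀ {x y : Fin (2 * (k + 1) + 1)}, (friendship (k + 1)).Adj x y →
      G.Adj (F x) (F y) := by
    intro x y hadj'
    rw [friendship, SimpleGraph.fromRel_adj] at hadj'
    obtain ⟨hne', hr⟩ := hadj'
    have hvalne : x.val ≠ y.val := fun h => hne' (Fin.ext h)
    have hr' : x.val = 0 ∨ y.val = 0 ∨ (x.val + 1) / 2 = (y.val + 1) / 2 := by tauto
    rcases hr' with h0 | h0 | h0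
    · rw [hF0 x h0]
      exact hFnz y (by omega)
    · rw [hF0 y h0]
      exact (hFnz x (by omega)).symm
    · have hx0 : x.val ≠ 0 := by omega
      have hy0 : y.val ≠ 0 := by omega
      have hhalf : (x.val - 1) / 2 = (y.val - 1) / 2 := by omega
      have hpar : x.val % 2 ≠ y.val % 2 := by omega
      rw [hFval x hx0, hFval y hy0]
      have hieq : (⟨(x.val - 1) / 2, hlt x⟩ : Fin (k+1))
          = ⟨(y.val - 1) / 2, hlt y⟩ := Fin.ext (by simpa using hhalf)
      rw [hieq]
      rcases Nat.mod_two_eq_zero_or_one x.val with hx2 | hx2 <;>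
        rcases Nat.mod_two_eq_zero_or_one y.val with hy2 | hy2
      · omega
      · rw [if_neg (by omega), if_pos hy2]
        exact (hadj _).symm
      · rw [if_pos hx2, if_neg (by omega)]
        exact hadj _
      · omega
  exact hfree ⟨⟨F, fun {x y} h => hhom h⟩, hFinj⟩

end lemB

end Aux

/-- An `F_{k+1}`-free graph has at most `⌊n²/4⌋ + k·Δ(G)` edges. -/
theorem stmt2 {V : Type*} [Fintype V] (n k : ℕ) (hV : Fintype.card V = n)
    (G : SimpleGraph V) (hfree : ¬ CopyIn (friendship (k + 1)) G) :
    edgeCount G ≤ n ^ 2 / 4 + k * maxDeg G := by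
  classical
  rcases isEmpty_or_nonempty V with hV0 | hV0
  · have hSE : IsEmpty (Sym2 V) := by
      constructor
      intro e
      induction e with
      | _ x y => exact hV0.false x
    have he : G.edgeSet = ∅ := Set.eq_empty_of_isEmpty _
    simp [edgeCount, he]
  · -- pick a vertex of maximum degree
    have hbdd : ∀ w, deg G w ≤ maxDeg G := fun w =>
      le_csSup (Set.Finite.bddAbove (Set.finite_range _)) ⟨w, rfl⟩
    obtain ⟨v, hv⟩ : maxDeg G ∈ Set.range (deg G) :=
      Set.Nonempty.csSup_mem (Set.range_nonempty _) (Set.finite_range _)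
    have hdegree : ∀ w, G.degree w = deg G w := by
      intro w
      rw [deg, SimpleGraph.degree, SimpleGraph.neighborFinset,
        Set.ncard_eq_toFinset_card']
    set Δ := maxDeg G with hΔ
    set A := G.neighborFinset v with hA
    have hAcard : A.card = Δ := by rw [hA, ← hv, ← hdegree]; rfl
    have hAuniv : A.card ≤ n := by rw [← hV]; exact Finset.card_le_univ A
    have hΔn : Δ ≤ n := hAcard ▸ hAuniv
    set P := G.edgeFinset.filter (fun e => ∀ x ∈ e, x ∈ A) with hPdef
    set Q := G.edgeFinset.filter (fun e => ¬ ∀ x ∈ e, x ∈ A) with hQdef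
    have hsplit : P.card + Q.card = G.edgeFinset.card :=
      Finset.card_filter_add_card_filter_not _
    have hEC : edgeCount G = G.edgeFinset.card := Set.ncard_eq_toFinset_card' _
    -- bound on P
    have hPbound : P.card ≤ k * Δ := by
      rw [← hAcard]
      apply lemC k A P
      · intro e he
        obtain ⟨he1, he2⟩ := Finset.mem_filter.1 he
        exact ⟨G.not_isDiag_of_mem_edgeFinset he1, he2⟩
      · exact lemB k G hfree v
    -- bound on Q
    have hQbound : Q.card ≤ (n - Δ) * Δ := by
      have hsub : Q ⊆ Aᶜ.biUnion (fun b => G.incidenceFinset b) := by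
        intro e he
        obtain ⟨he1, he2⟩ := Finset.mem_filter.1 he
        push_neg at he2
        obtain ⟨x, hxe, hxA⟩ := he2
        refine Finset.mem_biUnion.2 ⟨x, Finset.mem_compl.2 hxA, ?_⟩
        rw [SimpleGraph.mem_incidenceFinset]
        exact ⟨SimpleGraph.mem_edgeFinset.1 he1, hxe⟩
      calc Q.card ≤ (Aᶜ.biUnion (fun b => G.incidenceFinset b)).card :=
            Finset.card_le_card hsub
        _ ≤ ∑ b ∈ Aᶜ, (G.incidenceFinset b).card := Finset.card_biUnion_le
        _ ≤ ∑ _b ∈ Aᶜ, Δ := by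
            apply Finset.sum_le_sum
            intro b _
            rw [SimpleGraph.card_incidenceFinset_eq_degree, hdegree]
            exact hbdd b
        _ = Aᶜ.card * Δ := by rw [Finset.sum_const, smul_eq_mul]
        _ = (n - Δ) * Δ := by rw [Finset.card_compl, hAcard, hV]
    have hQ4 : (n - Δ) * Δ ≤ n ^ 2 / 4 := by
      rw [Nat.le_div_iff_mul_le (by norm_num : (0:ℕ) < 4)]
      have hm : n = Δ + (n - Δ) := by omega
      zify
      nlinarith [sq_nonneg ((Δ : ℤ) - (n - Δ : ℕ)), hm]
    calc edgeCount G = P.card + Q.card := by rw [hEC, hsplit]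
      _ ≤ k * Δ + n ^ 2 / 4 := Nat.add_le_add hPbound (hQbound.trans hQ4)
      _ = n ^ 2 / 4 + k * Δ := Nat.add_comm _ _
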